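/- Let G be a connected graph with minimum degree at least 3, v a vertex of G, and u any cut vertex of G. Then any non-backtracking walk W from v to u is revealed by v. -/

import Mathlib

open SimpleGraph

variable {V : Type*}

/-- A walk is non-backtracking if no vertex equals the vertex two steps later. -/
def NonBacktracking {G : SimpleGraph V} {u v : V} (p : G.Walk u v) : Prop :=
  ∀ i : ℕ, i + 2 < p.support.length → p.support[i]? ≠ p.support[i + 2]?

/-- The weight of a walk: the sum of the weights of its edges, with multiplicity. -/
def walkWeight {G : SimpleGraph V} (F : Sym2 V → ℝ) {u v : V} (p : G.Walk u v) : ℝ :=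
  (p.edges.map F).sum

/-- An edge `e` is revealed by a set `S` of vertices if an integer combination of weights of
closed non-backtracking walks from vertices of `S` equals a nonzero multiple of the weight
of `e`, for every weight function. -/
def RevealedBySet (G : SimpleGraph V) (S : Set V) (e : Sym2 V) : Prop :=
  ∃ (l : ℕ) (w : Fin l → V) (W : ∀ i, G.Walk (w i) (w i)) (c : Fin l → ℤ) (ce : ℤ),
    (∀ i, w i ∈ S) ∧ (∀ i, NonBacktracking (W i)) ∧ (∀ i, c i ≠ 0) ∧ ce ≠ 0 ∧
    ∀ F : Sym2 V → ℝ, ∑ i, (c i : ℝ) * walkWeight F (W i) = (ce : ℝ) * F e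

/-- A walk `W` is revealed by the vertex `v`. -/
def WalkRevealedBy (G : SimpleGraph V) (v : V) {a b : V} (W : G.Walk a b) : Prop :=
  ∃ (l : ℕ) (Ws : Fin l → G.Walk v v) (c : Fin l → ℤ) (cW : ℤ),
    (∀ i, NonBacktracking (Ws i)) ∧ (∀ i, c i ≠ 0) ∧ cW ≠ 0 ∧
    ∀ F : Sym2 V → ℝ, ∑ i, (c i : ℝ) * walkWeight F (Ws i) = (cW : ℝ) * walkWeight F W

/-- `G` is odometric: every edge is revealed by every single vertex. -/
def Odometric (G : SimpleGraph V) : Prop :=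
  ∀ v : V, ∀ e ∈ G.edgeSet, RevealedBySet G {v} e

/-- `u` is a cut vertex of `G`. -/
def IsCutVertex (G : SimpleGraph V) (u : V) : Prop :=
  G.Connected ∧ ¬ (G.induce {x : V | x ≠ u}).Connected

/-- The induced subgraph on `B` is 2-connected. -/
def TwoConnectedOn (G : SimpleGraph V) (B : Set V) : Prop :=
  3 ≤ B.ncard ∧ (G.induce B).Connected ∧ ∀ u ∈ B, (G.induce (B \ {u})).Connected

/-- `B` is a maximal 2-connected block of `G`. -/
def IsBlock (G : SimpleGraph V) (B : Set V) : Prop :=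
  TwoConnectedOn G B ∧ ∀ B', B ⊆ B' → TwoConnectedOn G B' → B' = B

def NBL (l : List V) : Prop := ∀ i : ℕ, i + 2 < l.length → l[i]? ≠ l[i + 2]?

lemma NBL_append {l1 l2 : List V} (h1 : NBL l1) (h2 : NBL l2)
    (c1 : ∀ i, i + 2 = l1.length → ∀ a b, l1[i]? = some a → l2[0]? = some b → a ≠ b)
    (c2 : ∀ i, i + 1 = l1.length → ∀ a b, l1[i]? = some a → l2[1]? = some b → a ≠ b) :
    NBL (l1 ++ l2) := by
  intro i hi
  rw [List.length_append] at hi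
  rcases lt_trichotomy (i + 2) l1.length with h | h | h
  · rw [List.getElem?_append_left (by omega), List.getElem?_append_left h]
    exact h1 i h
  · rw [List.getElem?_append_left (by omega), List.getElem?_append_right (le_of_eq h.symm)]
    have : i + 2 - l1.length = 0 := by omega
    rw [this]
    intro he
    rcases heq : l1[i]? with _ | a
    · rw [List.getElem?_eq_none_iff] at heq; omega
    · rcases heq2 : l2[0]? with _ | b
      · rw [heq, heq2] at he; simp at he
      · exact c1 i h a b heq heq2 (by rw [heq, heq2] at he; injection he)
  · rcases le_or_gt l1.length i with h' | h'
    · rw [List.getElem?_append_right h', List.getElem?_append_right (by omega)]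
      have : i + 2 - l1.length = (i - l1.length) + 2 := by omega
      rw [this]
      exact h2 _ (by omega)
    · -- i < l1.length < i + 2, so i + 1 = l1.length
      have hi1 : i + 1 = l1.length := by omega
      rw [List.getElem?_append_left h', List.getElem?_append_right (by omega)]
      have : i + 2 - l1.length = 1 := by omega
      rw [this]
      intro he
      rcases heq : l1[i]? with _ | a
      · rw [List.getElem?_eq_none_iff] at heq; omega
      · rcases heq2 : l2[1]? with _ | b
        · rw [heq, heq2] at he; simp at he
        · exact c2 i hi1 a b heq heq2 (by rw [heq, heq2] at he; injection he)

lemma NBL_reverse {l : List V} (h : NBL l) : NBL l.reverse := by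
  intro i hi
  rw [List.length_reverse] at hi
  rw [List.getElem?_reverse (by omega), List.getElem?_reverse (by omega)]
  have h3 : l.length - 1 - (i + 2) + 2 = l.length - 1 - i := by omega
  intro he
  exact h (l.length - 1 - (i + 2)) (by omega) (by rw [h3, he])

lemma NBL_tail {l : List V} (h : NBL l) : NBL l.tail := by
  intro i hi
  rw [List.length_tail] at hi
  rw [List.getElem?_tail, List.getElem?_tail]
  exact h (i + 1) (by omega)

lemma NBL_singleton {a : V} : NBL [a] := by intro i hi; simp at hi

lemma NBL_nil : NBL ([] : List V) := by intro i hi; simp at hi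

section Greedy
variable {G : SimpleGraph V} [Fintype V] [DecidableRel G.Adj] [DecidableEq V]

/-- choose a neighbor of `c` distinct from `p` and `u` -/
lemma exists_next (hdeg : ∀ x, 3 ≤ G.degree x) (c p u : V) :
    ∃ q, G.Adj c q ∧ q ≠ p ∧ q ≠ u := by
  have h : (G.neighborFinset c \ {p, u}).Nonempty := by
    rw [← Finset.card_pos]
    have h1 := Finset.card_le_card (Finset.sdiff_subset (s := G.neighborFinset c) (t := {p, u}))
    have h2 : (G.neighborFinset c \ {p, u}).card ≥ G.degree c - 2 := by
      have := Finset.le_card_sdiff ({p, u} : Finset V) (G.neighborFinset c)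
      have hc : ({p, u} : Finset V).card ≤ 2 := Finset.card_insert_le _ _ |>.trans (by simp)
      rw [← G.card_neighborFinset_eq_degree]
      omega
    have := hdeg c
    omega
  obtain ⟨q, hq⟩ := h
  simp only [Finset.mem_sdiff, mem_neighborFinset, Finset.mem_insert, Finset.mem_singleton] at hq
  exact ⟨q, hq.1, fun h => hq.2 (Or.inl h), fun h => hq.2 (Or.inr h)⟩

noncomputable def nxt (hdeg : ∀ x, 3 ≤ G.degree x) (c p u : V) : V :=
  (exists_next hdeg c p u).choose

lemma nxt_adj (hdeg : ∀ x, 3 ≤ G.degree x) (c p u : V) : G.Adj c (nxt hdeg c p u) :=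
  (exists_next hdeg c p u).choose_spec.1
lemma nxt_ne_p (hdeg : ∀ x, 3 ≤ G.degree x) (c p u : V) : nxt hdeg c p u ≠ p :=
  (exists_next hdeg c p u).choose_spec.2.1
lemma nxt_ne_u (hdeg : ∀ x, 3 ≤ G.degree x) (c p u : V) : nxt hdeg c p u ≠ u :=
  (exists_next hdeg c p u).choose_spec.2.2

noncomputable def fpair (hdeg : ∀ x, 3 ≤ G.degree x) (u z : V) : ℕ → V × V
  | 0 => (z, nxt hdeg z u u)
  | n+1 => ((fpair hdeg u z n).2, nxt hdeg (fpair hdeg u z n).2 (fpair hdeg u z n).1 u)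

noncomputable def gf (hdeg : ∀ x, 3 ≤ G.degree x) (u z : V) (n : ℕ) : V :=
  (fpair hdeg u z n).1

variable (hdeg : ∀ x, 3 ≤ G.degree x) (u z : V)

lemma gf_zero : gf hdeg u z 0 = z := rfl

lemma gf_succ_eq (n : ℕ) : gf hdeg u z (n+1) = (fpair hdeg u z n).2 := rfl

lemma gf_adj (hz : G.Adj u z) (n : ℕ) : G.Adj (gf hdeg u z n) (gf hdeg u z (n+1)) := by
  cases n with
  | zero => exact nxt_adj hdeg z u u
  | succ m => exact nxt_adj hdeg _ _ u

lemma gf_nb (n : ℕ) : gf hdeg u z (n + 2) ≠ gf hdeg u z n := by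
  cases n with
  | zero => exact nxt_ne_p hdeg _ _ u
  | succ m => exact nxt_ne_p hdeg _ _ u

lemma gf_ne_u (hz : G.Adj u z) (n : ℕ) : gf hdeg u z n ≠ u := by
  cases n with
  | zero => exact fun h => (G.ne_of_adj hz h.symm).elim  -- z ≠ u
  | succ m => cases m with
    | zero => exact nxt_ne_u hdeg _ _ u
    | succ k => exact nxt_ne_u hdeg _ _ u

end Greedy

section Loop
variable {G : SimpleGraph V} [Fintype V] [DecidableRel G.Adj] [DecidableEq V]

lemma NBL_loop {l : List V} {u : V} (h : NBL l) (hne : ∀ a ∈ l, a ≠ u)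
    (hlen : 2 ≤ l.length) : NBL (u :: (l ++ [u])) := by
  have h2 : NBL (l ++ [u]) := by
    apply NBL_append h NBL_singleton
    · intro i _ a b ha hb
      have hb' : b = u := by
        have : ([u] : List V)[0]? = some u := rfl
        rw [this] at hb; injection hb with hb; exact hb.symm
      subst hb'
      exact hne a (List.mem_of_getElem? ha)
    · intro i _ a b _ hb
      have : ([u] : List V)[1]? = none := rfl
      rw [this] at hb; cases hb
  show NBL ([u] ++ (l ++ [u]))
  apply NBL_append NBL_singleton h2
  · intro i hi a b _ _
    simp only [List.length_singleton] at hi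
    omega
  · intro i hi a b ha hb
    simp only [List.length_singleton] at hi
    have hi0 : i = 0 := by omega
    subst hi0
    have ha' : a = u := by
      have : ([u] : List V)[0]? = some u := rfl
      rw [this] at ha; injection ha with ha; exact ha.symm
    subst ha'
    rw [List.getElem?_append_left (by omega)] at hb
    exact fun hab => (hne b (List.mem_of_getElem? hb)) hab.symm

noncomputable def wk (hdeg : ∀ x, 3 ≤ G.degree x) (u z : V) (hz : G.Adj u z) :
    (n : ℕ) → G.Walk z (gf hdeg u z n)
  | 0 => Walk.nil.copy rfl (gf_zero hdeg u z).symm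
  | n+1 => (wk hdeg u z hz n).concat (gf_adj hdeg u z hz n)

variable (hdeg : ∀ x, 3 ≤ G.degree x) (u z : V) (hz : G.Adj u z)
include hdeg hz

lemma wk_support (n : ℕ) :
    (wk hdeg u z hz n).support = (List.range (n+1)).map (gf hdeg u z) := by
  induction n with
  | zero =>
    simp [wk, Walk.support_copy, List.range_succ, gf_zero]
  | succ m ih =>
    rw [wk, Walk.support_concat, ih, List.range_succ (n := m + 1), List.map_append]
    simp [List.concat_eq_append]

lemma NBL_map_range (n : ℕ) : NBL ((List.range n).map (gf hdeg u z)) := by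
  intro i hi
  rw [List.length_map, List.length_range] at hi
  rw [List.getElem?_map, List.getElem?_map, List.getElem?_range (by omega),
    List.getElem?_range (by omega)]
  intro h
  simp only [Option.map_some] at h
  exact gf_nb hdeg u z i (by injection h with h; exact h.symm)

/-- main construction: a closed non-backtracking walk at `u` entering and leaving via `z`. -/
lemma exists_loop : ∃ (C : G.Walk u u) (l : List V),
    C.support = u :: (l ++ [u]) ∧ NBL C.support ∧ (∀ a ∈ l, a ≠ u) ∧
    l[0]? = some z ∧ l.getLast? = some z ∧ 2 ≤ l.length := by
  classical
  -- find first repetition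
  obtain ⟨a, b, hne, hab⟩ := Finite.exists_ne_map_eq_of_infinite (gf hdeg u z)
  set g := gf hdeg u z with hg
  have hex : ∃ n, ∃ m, m < n ∧ g m = g n := by
    rcases Nat.lt_or_ge a b with h | h
    · exact ⟨b, a, h, hab⟩
    · exact ⟨a, b, by omega, hab.symm⟩
  set j := Nat.find hex with hj
  obtain ⟨i, hij, hgij⟩ := Nat.find_spec hex
  rw [← hj] at hij hgij
  have hinj : ∀ a b, a < j → b < j → g a = g b → a = b := by
    intro a b ha hb heq
    by_contra hne'
    rcases Nat.lt_or_ge a b with h | h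
    · exact Nat.find_min hex hb ⟨a, h, heq⟩
    · have : b < a := by omega
      exact Nat.find_min hex ha ⟨b, this, heq.symm⟩
  -- j ≥ i + 3
  have hji3 : i + 3 ≤ j := by
    rcases Nat.lt_or_ge j (i + 3) with h | h
    · exfalso
      have h1 : j = i + 1 ∨ j = i + 2 := by omega
      rcases h1 with h1 | h1 <;> rw [h1] at hgij
      · exact (G.ne_of_adj (gf_adj hdeg u z hz i)) hgij
      · exact (gf_nb hdeg u z i) hgij.symm
    · exact h
  -- build the closed walk D at z
  let A := wk hdeg u z hz j
  let B := ((wk hdeg u z hz i).reverse.copy hgij rfl)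
  let D := A.append B
  have hDsup : D.support
      = (List.range (j+1)).map g ++ ((List.range i).reverse.map g) := by
    show (A.append B).support = _
    rw [Walk.support_append, wk_support, Walk.support_copy, Walk.support_reverse, wk_support]
    congr 1
    simp [List.range_succ]
    intro _ _; rfl
  have hgetl1 : ∀ k, k ≤ j → ((List.range (j+1)).map g)[k]? = some (g k) := by
    intro k hk
    rw [List.getElem?_map, List.getElem?_range (by omega)]
    rfl
  have hgetl2 : ∀ k, k < i → ((List.range i).reverse.map g)[k]? = some (g (i - 1 - k)) := by
    intro k hk
    rw [List.getElem?_map, List.getElem?_reverse (by simpa using hk),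
      List.length_range, List.getElem?_range (by omega)]
    rfl
  have hlen2 : ((List.range i).reverse.map g).length = i := by simp
  have hDnb : NBL D.support := by
    rw [hDsup]
    apply NBL_append (NBL_map_range hdeg u z hz (j+1))
    · rw [List.map_reverse]
      exact NBL_reverse (NBL_map_range hdeg u z hz i)
    · intro k hk a c ha hc
      rw [List.length_map, List.length_range] at hk
      rcases Nat.eq_zero_or_pos i with hi0 | hi0
      · rw [List.getElem?_eq_none (by rw [hlen2]; omega)] at hc
        cases hc
      · rw [hgetl1 k (by omega)] at ha
        rw [hgetl2 0 (by omega)] at hc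
        injection ha with ha; injection hc with hc
        subst ha; subst hc
        intro hacc
        have := hinj k (i - 1 - 0) (by omega) (by omega) hacc
        omega
    · intro k hk a c ha hc
      rw [List.length_map, List.length_range] at hk
      have hk' : k = j := by omega
      subst hk'
      rcases Nat.lt_or_ge 1 i with hi1 | hi1
      · rw [hgetl1 j (by omega)] at ha
        rw [hgetl2 1 (by omega)] at hc
        injection ha with ha; injection hc with hc
        subst ha; subst hc
        intro hacc
        exact gf_nb hdeg u z (i - 1 - 1)
          (by rw [show (i - 1 - 1) + 2 = i from by omega]; exact hgij.trans hacc)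
      · -- l2 has length ≤ 1 so l2[1]? = none
        rw [List.getElem?_eq_none (by rw [hlen2]; omega)] at hc
        cases hc
  have hmem : ∀ a ∈ D.support, a ≠ u := by
    intro a ha
    rw [hDsup, List.mem_append] at ha
    rcases ha with ha | ha <;> rw [List.mem_map] at ha <;>
      obtain ⟨k, _, hk⟩ := ha <;> rw [← hk] <;> exact gf_ne_u hdeg u z hz k
  refine ⟨Walk.cons hz (D.append (Walk.cons hz.symm Walk.nil)), D.support, ?_, ?_, hmem, ?_, ?_, ?_⟩
  · rw [Walk.support_cons, Walk.support_append]
    rfl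
  · rw [Walk.support_cons, Walk.support_append, show (Walk.cons hz.symm Walk.nil :
      G.Walk z u).support.tail = [u] from rfl]
    apply NBL_loop hDnb hmem
    rw [hDsup, List.length_append, List.length_map, List.length_range]
    omega
  · rw [hDsup, List.getElem?_append_left (by simp), hgetl1 0 (by omega)]
    rfl
  · have h1 := Walk.getLast_support D
    rw [List.getLast?_eq_getLast (l := D.support) (by exact D.support_ne_nil), h1]
  · rw [hDsup, List.length_append, List.length_map, List.length_range]
    omega

end Loop

section Assembly
variable {G : SimpleGraph V}

lemma glue {S R : List V} {x u : V} (hS : NBL S) (hR : NBL R)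
    (hSpen : ∀ i, i + 2 = S.length → S[i]? = some x)
    (hSlast : ∀ i, i + 1 = S.length → S[i]? = some u)
    (hR0 : ∀ b, R[0]? = some b → b ≠ x)
    (hR1 : ∀ b, R[1]? = some b → b ≠ u) : NBL (S ++ R) := by
  apply NBL_append hS hR
  · intro i hi a b ha hb
    rw [hSpen i hi] at ha
    injection ha with ha
    subst ha
    exact fun h => hR0 b hb h.symm
  · intro i hi a b ha hb
    rw [hSlast i hi] at ha
    injection ha with ha
    subst ha
    exact fun h => hR1 b hb h.symm

lemma walkWeight_append (F : Sym2 V → ℝ) {a b c : V} (p : G.Walk a b) (q : G.Walk b c) :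
    walkWeight F (p.append q) = walkWeight F p + walkWeight F q := by
  unfold walkWeight
  rw [Walk.edges_append, List.map_append, List.sum_append]

lemma walkWeight_reverse (F : Sym2 V → ℝ) {a b : V} (p : G.Walk a b) :
    walkWeight F p.reverse = walkWeight F p := by
  unfold walkWeight
  rw [Walk.edges_reverse, List.map_reverse, List.sum_reverse]

end Assembly

section Lfacts
variable {G : SimpleGraph V}

lemma Lfacts {u z : V} {C : G.Walk u u} {l' : List V}
    (hsup : C.support = u :: (l' ++ [u])) (hnb : NBL C.support)
    (hne : ∀ a ∈ l', a ≠ u) (h0 : l'[0]? = some z) (hlast : l'.getLast? = some z)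
    (hlen : 2 ≤ l'.length) :
    NBL (l' ++ [u]) ∧ ((l' ++ [u])[0]? = some z) ∧
    (∀ b, (l' ++ [u])[1]? = some b → b ≠ u) ∧
    (∀ i, i + 2 = (l' ++ [u]).length → (l' ++ [u])[i]? = some z) ∧
    (∀ i, i + 1 = (l' ++ [u]).length → (l' ++ [u])[i]? = some u) := by
  refine ⟨?_, ?_, ?_, ?_, ?_⟩
  · have h := NBL_tail (l := C.support) (by exact hnb)
    rw [hsup] at h
    simpa using h
  · rw [List.getElem?_append_left (by omega)]
    exact h0
  · intro b hb
    rw [List.getElem?_append_left (by omega)] at hb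
    exact hne b (List.mem_of_getElem? hb)
  · intro i hi
    rw [List.length_append, List.length_singleton] at hi
    have hi' : i = l'.length - 1 := by omega
    subst hi'
    rw [List.getElem?_append_left (by omega), ← List.getLast?_eq_getElem?]
    exact hlast
  · intro i hi
    rw [List.length_append, List.length_singleton] at hi
    have hi' : i = l'.length := by omega
    subst hi'
    exact List.getElem?_concat_length

end Lfacts

/-- in a connected graph of minimum degree at least 3, any non-backtracking walk
from a vertex `v` to any cut vertex `u` is revealed by `v`. -/
theorem walk_to_cutVertex_revealed {G : SimpleGraph V} [Fintype V] [DecidableRel G.Adj]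
    (hconn : G.Connected) (hdeg : ∀ x, 3 ≤ G.degree x)
    (v u : V) (hu : IsCutVertex G u) (W : G.Walk v u) (hW : NonBacktracking W) :
    WalkRevealedBy G v W := by
  classical
  rcases Nat.eq_zero_or_pos W.length with hm | hm
  · refine ⟨0, Fin.elim0, Fin.elim0, 1, (fun i => i.elim0), (fun i => i.elim0), one_ne_zero, ?_⟩
    intro F
    have he : W.edges = [] := List.length_eq_zero_iff.mp (by rw [Walk.length_edges]; exact hm)
    simp [walkWeight, he]
  · have hWnb : NBL W.support := hW
    have hlenSW : W.support.length = W.length + 1 := Walk.length_support W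
    -- decompose the reversed walk to get the penultimate vertex x
    have hnotnil : ¬ W.reverse.Nil := by
      rw [Walk.nil_iff_length_eq, Walk.length_reverse]
      omega
    obtain ⟨x, hadj, R, hR⟩ := Walk.not_nil_iff.mp hnotnil
    have hrev : W.support.reverse = u :: R.support := by
      rw [← Walk.support_reverse, hR, Walk.support_cons]
    set T := R.support with hT
    have hT0 : T[0]? = some x := by
      rw [hT, Walk.support_eq_cons]
      simp
    have hTnb : NBL T := by
      have h := NBL_tail (NBL_reverse hWnb)
      rw [hrev] at h
      simpa using h
    have hTk : ∀ k, T[k]? = W.support.reverse[k + 1]? := by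
      intro k
      rw [hrev, List.getElem?_cons_succ]
    have hlastSW : ∀ i, i + 1 = W.support.length → W.support[i]? = some u := by
      intro i hi
      have h0 : W.support.reverse[0]? = some u := by rw [hrev]; simp
      rw [List.getElem?_reverse (by omega)] at h0
      rw [show W.support.length - 1 - 0 = i from by omega] at h0
      exact h0
    have hpenSW : ∀ i, i + 2 = W.support.length → W.support[i]? = some x := by
      intro i hi
      have h1 : W.support.reverse[1]? = some x := by
        rw [← hT0, hTk 0]
      rw [List.getElem?_reverse (by omega)] at h1
      rw [show W.support.length - 1 - 1 = i from by omega] at h1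
      exact h1
    have hTne : ∀ b, T[1]? = some b → b ≠ u := by
      intro b hb
      rw [hTk 1] at hb
      rcases Nat.lt_or_ge 2 W.support.length with h2 | h2
      · rw [List.getElem?_reverse (by omega)] at hb
        intro hbu
        subst hbu
        exact hWnb (W.support.length - 1 - 2) (by omega)
          (by rw [hb, show W.support.length - 1 - 2 + 2 = W.support.length - 1 from by omega,
                hlastSW (W.support.length - 1) (by omega)])
      · rw [List.getElem?_eq_none (by rw [List.length_reverse]; omega)] at hb
        cases hb
    -- choose two neighbors of u distinct from x
    obtain ⟨p, hp, q, hq, hpq⟩ : ∃ p ∈ G.neighborFinset u \ {x},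
        ∃ q ∈ G.neighborFinset u \ {x}, p ≠ q := by
      apply Finset.one_lt_card.mp
      have h1 := Finset.le_card_sdiff ({x} : Finset V) (G.neighborFinset u)
      have h2 : (G.neighborFinset u).card = G.degree u := G.card_neighborFinset_eq_degree u
      have h3 := hdeg u
      simp only [Finset.card_singleton] at h1
      omega
    simp only [Finset.mem_sdiff, mem_neighborFinset, Finset.mem_singleton] at hp hq
    obtain ⟨hpadj, hpx⟩ := hp
    obtain ⟨hqadj, hqx⟩ := hq
    obtain ⟨Cp, lp, hCp, hCpnb, hlpne, hlp0, hlplast, hlplen⟩ := exists_loop hdeg u p hpadj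
    obtain ⟨Cq, lq, hCq, hCqnb, hlqne, hlq0, hlqlast, hlqlen⟩ := exists_loop hdeg u q hqadj
    obtain ⟨hLpnb, hLp0, hLp1, hLppen, hLplast⟩ := Lfacts hCp hCpnb hlpne hlp0 hlplast hlplen
    obtain ⟨hLqnb, hLq0, hLq1, hLqpen, hLqlast⟩ := Lfacts hCq hCqnb hlqne hlq0 hlqlast hlqlen
    set Lp := lp ++ [u] with hLp
    set Lq := lq ++ [u] with hLq
    -- glued non-backtracking facts
    have hLpT : NBL (Lp ++ T) :=
      glue hLpnb hTnb hLppen hLplast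
        (fun b hb => by rw [hT0] at hb; injection hb with hb; subst hb; exact fun h => hpx h.symm)
        hTne
    have hLqT : NBL (Lq ++ T) :=
      glue hLqnb hTnb hLqpen hLqlast
        (fun b hb => by rw [hT0] at hb; injection hb with hb; subst hb; exact fun h => hqx h.symm)
        hTne
    have hLpLqT : NBL (Lp ++ (Lq ++ T)) :=
      glue hLpnb hLqT hLppen hLplast
        (fun b hb => by
          rw [List.getElem?_append_left (by rw [hLq, List.length_append]; omega), hLq0] at hb
          injection hb with hb; subst hb; exact hpq.symm)
        (fun b hb => by
          rw [List.getElem?_append_left (by rw [hLq, List.length_append, List.length_singleton]; omega)] at hb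
          exact hLq1 b hb)
    have top : ∀ (Rst : List V), NBL Rst → (∀ b, Rst[0]? = some b → b ≠ x) →
        (∀ b, Rst[1]? = some b → b ≠ u) → NBL (W.support ++ Rst) := by
      intro Rst h1 h2 h3
      exact glue hWnb h1 hpenSW hlastSW h2 h3
    have hRp0 : ∀ (M : List V) b, ((Lp ++ M))[0]? = some b → b = p := by
      intro M b hb
      rw [List.getElem?_append_left (by rw [hLp, List.length_append]; omega), hLp0] at hb
      injection hb with hb; exact hb.symm
    have hRp1 : ∀ (M : List V) b, ((Lp ++ M))[1]? = some b → b ≠ u := by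
      intro M b hb
      rw [List.getElem?_append_left (by rw [hLp, List.length_append, List.length_singleton]; omega)] at hb
      exact hLp1 b hb
    have hRq0 : ∀ (M : List V) b, ((Lq ++ M))[0]? = some b → b = q := by
      intro M b hb
      rw [List.getElem?_append_left (by rw [hLq, List.length_append]; omega), hLq0] at hb
      injection hb with hb; exact hb.symm
    have hRq1 : ∀ (M : List V) b, ((Lq ++ M))[1]? = some b → b ≠ u := by
      intro M b hb
      rw [List.getElem?_append_left (by rw [hLq, List.length_append, List.length_singleton]; omega)] at hb
      exact hLq1 b hb
    have hX1nb : NBL (W.support ++ (Lp ++ T)) :=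
      top _ hLpT (fun b hb => by rw [hRp0 T b hb]; exact hpx) (hRp1 T)
    have hX2nb : NBL (W.support ++ (Lq ++ T)) :=
      top _ hLqT (fun b hb => by rw [hRq0 T b hb]; exact hqx) (hRq1 T)
    have hX3nb : NBL (W.support ++ (Lp ++ (Lq ++ T))) :=
      top _ hLpLqT (fun b hb => by rw [hRp0 (Lq ++ T) b hb]; exact hpx) (hRp1 (Lq ++ T))
    -- the three closed walks
    refine ⟨3, ![W.append (Cp.append W.reverse), W.append (Cq.append W.reverse),
      W.append (Cp.append (Cq.append W.reverse))], ![1, 1, -1], 2, ?_, ?_, by norm_num, ?_⟩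
    · have hnb1 : NonBacktracking (W.append (Cp.append W.reverse)) := by
        show NBL _
        rw [Walk.support_append, Walk.support_append, hCp, Walk.support_reverse, hrev]
        simpa using hX1nb
      have hnb2 : NonBacktracking (W.append (Cq.append W.reverse)) := by
        show NBL _
        rw [Walk.support_append, Walk.support_append, hCq, Walk.support_reverse, hrev]
        simpa using hX2nb
      have hnb3 : NonBacktracking (W.append (Cp.append (Cq.append W.reverse))) := by
        show NBL _
        rw [Walk.support_append, Walk.support_append, hCp, Walk.support_append, hCq,
          Walk.support_reverse, hrev]
        simpa using hX3nb
      intro i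
      fin_cases i
      · exact hnb1
      · exact hnb2
      · exact hnb3
    · intro i
      fin_cases i <;> norm_num
    · intro F
      rw [Fin.sum_univ_three]
      simp only [Matrix.cons_val_zero, Matrix.cons_val_one, Matrix.head_cons,
        Matrix.cons_val_two, Matrix.tail_cons, walkWeight_append, walkWeight_reverse]
      push_cast
      ring
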